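/- For m ≥ 3 and i ≥ 4, the number of dominating sets of size i in the lollipop graph L_{m,3} equals C(m+2,i−1) + C(m,i−2) + C(m−1,i−2). -/

import Mathlib

/-- A finite set of vertices dominates the graph. -/
def Dominates {V : Type*} (G : SimpleGraph V) (U : Finset V) : Prop :=
  ∀ v : V, v ∈ U ∨ ∃ u ∈ U, G.Adj u v

/-- The number of dominating sets of size `i`. -/
noncomputable def domCount {V : Type*} [Fintype V] (G : SimpleGraph V) (i : ℕ) : ℕ :=
  Nat.card {U : Finset V // U.card = i ∧ Dominates G U}

/-- The asymmetric adjacency relation of the lollipop graph `L_{m,n}`: a complete graph on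
`Fin m`, a path on `Fin n`, and an edge joining vertex `0` of the complete graph to
the endpoint `0` of the path. -/
def lollipopRel {m n : ℕ} : (Fin m ⊕ Fin n) → (Fin m ⊕ Fin n) → Prop
  | .inl a, .inl b => a ≠ b
  | .inl a, .inr i => (a : ℕ) = 0 ∧ (i : ℕ) = 0
  | .inr i, .inr j => (i : ℕ) + 1 = (j : ℕ)
  | _, _ => False

/-- The `(m,n)`-lollipop graph. -/
def lollipop (m n : ℕ) : SimpleGraph (Fin m ⊕ Fin n) :=
  SimpleGraph.fromRel lollipopRel

open Finset

section Aux
variable {m n : ℕ}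

@[simp] lemma rel_inl_inl {a b : Fin m} : lollipopRel (n := n) (.inl a) (.inl b) ↔ a ≠ b := Iff.rfl
@[simp] lemma rel_inl_inr {a : Fin m} {i : Fin n} :
    lollipopRel (.inl a) (.inr i) ↔ (a : ℕ) = 0 ∧ (i : ℕ) = 0 := Iff.rfl
@[simp] lemma rel_inr_inl {a : Fin m} {i : Fin n} : lollipopRel (.inr i) (.inl a) ↔ False := Iff.rfl
@[simp] lemma rel_inr_inr {i j : Fin n} :
    lollipopRel (m := m) (.inr i) (.inr j) ↔ (i : ℕ) + 1 = (j : ℕ) := Iff.rfl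

lemma lollipop_adj (u v : Fin m ⊕ Fin n) :
    (lollipop m n).Adj u v ↔ u ≠ v ∧ (lollipopRel u v ∨ lollipopRel v u) :=
  SimpleGraph.fromRel_adj _ _ _

lemma dom_iff (hm : 3 ≤ m) (U : Finset (Fin m ⊕ Fin 3)) :
    Dominates (lollipop m 3) U ↔
      ((∃ a : Fin m, Sum.inl a ∈ U) ∧
       (Sum.inr 1 ∈ U ∨ Sum.inr 2 ∈ U) ∧
       (Sum.inr 0 ∈ U ∨ Sum.inr 1 ∈ U ∨ Sum.inl (⟨0, by omega⟩ : Fin m) ∈ U)) := by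
  constructor
  · intro h
    refine ⟨?_, ?_, ?_⟩
    · rcases h (Sum.inl ⟨1, by omega⟩) with h1 | ⟨u, hu, hadj⟩
      · exact ⟨_, h1⟩
      · rcases u with a | j
        · exact ⟨_, hu⟩
        · rw [lollipop_adj] at hadj
          simp at hadj
    · rcases h (Sum.inr 2) with h1 | ⟨u, hu, hadj⟩
      · exact Or.inr h1
      · rcases u with a | j
        · rw [lollipop_adj] at hadj
          simp at hadj
        · rw [lollipop_adj] at hadj
          simp at hadj
          have hj : j = 1 := by
            have := j.isLt
            have h2 : ((2 : Fin 3) : ℕ) = 2 := rfl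
            have hh := hadj.2
            rcases hh with h | h
            · exact Fin.ext (by omega)
            · omega
          subst hj
          exact Or.inl hu
    · rcases h (Sum.inr 0) with h1 | ⟨u, hu, hadj⟩
      · exact Or.inl h1
      · rcases u with a | j
        · rw [lollipop_adj] at hadj
          simp at hadj
          have : a = (⟨0, by omega⟩ : Fin m) := Fin.ext hadj
          rw [this] at hu
          exact Or.inr (Or.inr hu)
        · rw [lollipop_adj] at hadj
          simp at hadj
          have hj : j = 1 := by
            have := j.isLt
            exact Fin.ext (by omega)
          subst hj
          exact Or.inr (Or.inl hu)
  · rintro ⟨⟨a, ha⟩, h2, h3⟩ v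
    rcases v with b | j
    · by_cases hb : Sum.inl b ∈ U
      · exact Or.inl hb
      · refine Or.inr ⟨Sum.inl a, ha, ?_⟩
        rw [lollipop_adj]
        have hab : a ≠ b := by rintro rfl; exact hb ha
        simp [hab]
    · obtain ⟨jv, hjv⟩ := j
      interval_cases jv
      · rcases h3 with h | h | h
        · exact Or.inl h
        · refine Or.inr ⟨Sum.inr 1, h, ?_⟩
          rw [lollipop_adj]
          refine ⟨by simp, Or.inr ?_⟩
          simp
        · refine Or.inr ⟨Sum.inl ⟨0, by omega⟩, h, ?_⟩
          rw [lollipop_adj]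
          exact ⟨by simp, Or.inl (by simp)⟩
      · rcases h2 with h | h
        · exact Or.inl h
        · refine Or.inr ⟨Sum.inr 2, h, ?_⟩
          rw [lollipop_adj]
          refine ⟨by simp, Or.inr ?_⟩
          simp
      · rcases h2 with h | h
        · refine Or.inr ⟨Sum.inr 1, h, ?_⟩
          rw [lollipop_adj]
          refine ⟨by simp, Or.inl ?_⟩
          simp
        · exact Or.inl h

end Aux

open Finset

lemma count_card {m : ℕ} (k : ℕ) :
    (univ.filter fun A : Finset (Fin m) => A.card = k).card = m.choose k := by
  have h : (univ.filter fun A : Finset (Fin m) => A.card = k) = Finset.powersetCard k univ := by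
    rw [Finset.powersetCard_eq_filter, Finset.powerset_univ]
  rw [h, Finset.card_powersetCard, Finset.card_univ, Fintype.card_fin]

lemma countA {m : ℕ} (i k : ℕ) (hk : k < i) :
    (univ.filter fun A : Finset (Fin m) => A.card + k = i ∧ A.Nonempty).card
      = m.choose (i - k) := by
  rw [Finset.filter_congr (q := fun A => A.card = i - k) ?_, count_card]
  intro A _
  constructor
  · rintro ⟨h, _⟩; omega
  · intro h
    exact ⟨by omega, Finset.card_pos.mp (by omega)⟩

lemma countAz {m : ℕ} (i k : ℕ) (hk : k < i) (h0 : 0 < m) :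
    (univ.filter fun A : Finset (Fin m) =>
        A.card + k = i ∧ A.Nonempty ∧ (⟨0, h0⟩ : Fin m) ∈ A).card
      + (m - 1).choose (i - k) = m.choose (i - k) := by
  set z : Fin m := ⟨0, h0⟩
  have h1 : (univ.filter fun A : Finset (Fin m) => A.card + k = i ∧ A.Nonempty ∧ z ∈ A)
      = (univ.filter fun A : Finset (Fin m) => A.card = i - k).filter fun A => z ∈ A := by
    rw [Finset.filter_filter]
    apply Finset.filter_congr
    intro A _
    constructor
    · rintro ⟨h, _, hz⟩; exact ⟨by omega, hz⟩
    · rintro ⟨h, hz⟩; exact ⟨by omega, ⟨z, hz⟩, hz⟩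
  have h2 : ((univ.filter fun A : Finset (Fin m) => A.card = i - k).filter fun A => ¬ z ∈ A).card
      = (m - 1).choose (i - k) := by
    have e : ((univ.filter fun A : Finset (Fin m) => A.card = i - k).filter fun A => ¬ z ∈ A)
        = Finset.powersetCard (i - k) (univ.erase z) := by
      ext A
      simp only [Finset.mem_filter, Finset.mem_univ, true_and, Finset.mem_powersetCard,
        Finset.subset_erase, Finset.subset_univ, true_and]
      tauto
    rw [e, Finset.card_powersetCard, Finset.card_erase_of_mem (Finset.mem_univ z),
      Finset.card_univ, Fintype.card_fin]
  rw [h1, ← h2, Finset.card_filter_add_card_filter_not, count_card]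


lemma qcount {m : ℕ} (i : ℕ) (h0 : 0 < m) (B : Finset (Fin 3)) (k : ℕ) (hB : B.card = k)
    (hk : k < i) (hC1 : (1 : Fin 3) ∈ B ∨ (2 : Fin 3) ∈ B)
    (hC2 : (0 : Fin 3) ∈ B ∨ (1 : Fin 3) ∈ B) :
    (univ.filter fun A : Finset (Fin m) =>
        A.card + B.card = i ∧ A.Nonempty ∧ ((1 : Fin 3) ∈ B ∨ (2 : Fin 3) ∈ B) ∧
          ((0 : Fin 3) ∈ B ∨ (1 : Fin 3) ∈ B ∨ (⟨0, h0⟩ : Fin m) ∈ A)).card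
      = m.choose (i - k) := by
  rw [← countA i k hk]
  apply congrArg
  apply Finset.filter_congr
  intro A _
  rw [hB]
  constructor
  · rintro ⟨h1, h2, -, -⟩; exact ⟨h1, h2⟩
  · rintro ⟨h1, h2⟩
    exact ⟨h1, h2, hC1, by rcases hC2 with h | h; exacts [Or.inl h, Or.inr (Or.inl h)]⟩

lemma qcount0 {m : ℕ} (i : ℕ) (h0 : 0 < m) (B : Finset (Fin 3))
    (hC1 : ¬ ((1 : Fin 3) ∈ B ∨ (2 : Fin 3) ∈ B)) :
    (univ.filter fun A : Finset (Fin m) =>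
        A.card + B.card = i ∧ A.Nonempty ∧ ((1 : Fin 3) ∈ B ∨ (2 : Fin 3) ∈ B) ∧
          ((0 : Fin 3) ∈ B ∨ (1 : Fin 3) ∈ B ∨ (⟨0, h0⟩ : Fin m) ∈ A)).card = 0 := by
  rw [Finset.card_eq_zero]
  apply Finset.filter_false_of_mem
  rintro A - ⟨-, -, h, -⟩
  exact hC1 h

lemma qcount2 {m : ℕ} (i : ℕ) (h0 : 0 < m) (hi : 1 < i) :
    (univ.filter fun A : Finset (Fin m) =>
        A.card + ({2} : Finset (Fin 3)).card = i ∧ A.Nonempty ∧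
          ((1 : Fin 3) ∈ ({2} : Finset (Fin 3)) ∨ (2 : Fin 3) ∈ ({2} : Finset (Fin 3))) ∧
          ((0 : Fin 3) ∈ ({2} : Finset (Fin 3)) ∨ (1 : Fin 3) ∈ ({2} : Finset (Fin 3)) ∨
            (⟨0, h0⟩ : Fin m) ∈ A)).card
      + (m - 1).choose (i - 1) = m.choose (i - 1) := by
  rw [← countAz i 1 hi h0]
  congr 1
  apply congrArg
  apply Finset.filter_congr
  intro A _
  constructor
  · rintro ⟨h1, h2, -, h3⟩
    refine ⟨by simpa using h1, h2, ?_⟩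
    rcases h3 with h | h | h
    · exact absurd h (by decide)
    · exact absurd h (by decide)
    · exact h
  · rintro ⟨h1, h2, h3⟩
    exact ⟨by simpa using h1, h2, Or.inr (by decide), Or.inr (Or.inr h3)⟩

theorem domCount_lollipop_three (m i : ℕ) (hm : 3 ≤ m) (hi : 4 ≤ i) :
    domCount (lollipop m 3) i =
      Nat.choose (m + 2) (i - 1) + Nat.choose m (i - 2) + Nat.choose (m - 1) (i - 2) := by
  rw [domCount]
  classical
  have h0 : 0 < m := by omega
  set z : Fin m := ⟨0, h0⟩ with hz
  set q : Finset (Fin m) → Finset (Fin 3) → Prop := fun A B =>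
    A.card + B.card = i ∧ A.Nonempty ∧ ((1 : Fin 3) ∈ B ∨ (2 : Fin 3) ∈ B) ∧
      ((0 : Fin 3) ∈ B ∨ (1 : Fin 3) ∈ B ∨ z ∈ A) with hq
  rw [Nat.card_eq_fintype_card, Fintype.card_subtype]
  have key : ∀ U : Finset (Fin m ⊕ Fin 3),
      (U.card = i ∧ Dominates (lollipop m 3) U) ↔ q U.toLeft U.toRight := by
    intro U
    rw [dom_iff hm U, hq]
    have hc := Finset.card_toLeft_add_card_toRight (u := U)
    simp only [Finset.mem_toLeft, Finset.mem_toRight, Finset.Nonempty, hc]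
    exact Iff.rfl
  rw [Finset.filter_congr fun U _ => key U]
  rw [Finset.card_eq_sum_card_fiberwise (f := Finset.toRight)
    (t := (Finset.univ : Finset (Finset (Fin 3)))) (fun _ _ => Finset.mem_univ _)]
  have fib : ∀ B : Finset (Fin 3),
      ((univ.filter fun U : Finset (Fin m ⊕ Fin 3) => q U.toLeft U.toRight).filter
          fun U => U.toRight = B).card
        = (univ.filter fun A : Finset (Fin m) => q A B).card := by
    intro B
    apply Finset.card_nbij' (i := Finset.toLeft) (j := fun A => A.disjSum B)
    · intro U hU
      simp only [Finset.mem_coe, Finset.mem_filter, Finset.mem_univ, true_and] at hU ⊢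
      rw [← hU.2]
      exact hU.1
    · intro A hA
      simp only [Finset.mem_coe, Finset.mem_filter, Finset.mem_univ, true_and] at hA ⊢
      rw [Finset.toLeft_disjSum, Finset.toRight_disjSum]
      exact ⟨hA, rfl⟩
    · intro U hU
      simp only [Finset.mem_coe, Finset.mem_filter] at hU
      rw [← hU.2]
      exact Finset.toLeft_disjSum_toRight
    · intro A hA
      exact Finset.toLeft_disjSum
  rw [Finset.sum_congr rfl fun B _ => fib B]
  have huniv : (univ : Finset (Finset (Fin 3))) =
      {∅, {0}, {1}, {2}, {0, 1}, {0, 2}, {1, 2}, {0, 1, 2}} := by decide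
  rw [huniv, Finset.sum_insert (by decide), Finset.sum_insert (by decide),
    Finset.sum_insert (by decide), Finset.sum_insert (by decide), Finset.sum_insert (by decide),
    Finset.sum_insert (by decide), Finset.sum_insert (by decide), Finset.sum_singleton]
  simp only [hq, hz]
  rw [qcount0 i h0 ∅ (by decide), qcount0 i h0 {0} (by decide),
    qcount i h0 {1} 1 (by decide) (by omega) (by decide) (by decide),
    qcount i h0 {0, 1} 2 (by decide) (by omega) (by decide) (by decide),
    qcount i h0 {0, 2} 2 (by decide) (by omega) (by decide) (by decide),
    qcount i h0 {1, 2} 2 (by decide) (by omega) (by decide) (by decide),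
    qcount i h0 {0, 1, 2} 3 (by decide) (by omega) (by decide) (by decide)]
  have ht2 := qcount2 (m := m) i h0 (by omega)
  obtain ⟨a, rfl⟩ : ∃ a, i = a + 4 := ⟨i - 4, by omega⟩
  obtain ⟨b, rfl⟩ : ∃ b, m = b + 3 := ⟨m - 3, by omega⟩
  simp only [show a + 4 - 1 = a + 3 by omega, show a + 4 - 2 = a + 2 by omega,
    show a + 4 - 3 = a + 1 by omega, show b + 3 - 1 = b + 2 by omega,
    show b + 3 + 2 = b + 5 by omega] at ht2 ⊢
  have p1 : (b + 5).choose (a + 3) = (b + 4).choose (a + 2) + (b + 4).choose (a + 3) := by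
    rw [show b + 5 = (b + 4) + 1 by omega, show a + 3 = (a + 2) + 1 by omega,
      Nat.choose_succ_succ]
  have p2 : (b + 4).choose (a + 2) = (b + 3).choose (a + 1) + (b + 3).choose (a + 2) := by
    rw [show b + 4 = (b + 3) + 1 by omega, show a + 2 = (a + 1) + 1 by omega,
      Nat.choose_succ_succ]
  have p3 : (b + 4).choose (a + 3) = (b + 3).choose (a + 2) + (b + 3).choose (a + 3) := by
    rw [show b + 4 = (b + 3) + 1 by omega, show a + 3 = (a + 2) + 1 by omega,
      Nat.choose_succ_succ]
  have p4 : (b + 3).choose (a + 3) = (b + 2).choose (a + 2) + (b + 2).choose (a + 3) := by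
    rw [show b + 3 = (b + 2) + 1 by omega, show a + 3 = (a + 2) + 1 by omega,
      Nat.choose_succ_succ]
  omega
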